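/- Let J ≥ 0 be an integer and let α be a real number with 0 < α < π. Then I − P(α) is positive definite, where I is the (2J+1)×(2J+1) identity matrix and P(α) is the prolate matrix. -/

import Mathlib

open MeasureTheory Real Finset Complex Polynomial Matrix

-- integral of cos(kθ)
lemma cosInt (k β : ℝ) :
    ∫ θ in (-β)..β, Real.cos (k * θ)
      = if k = 0 then 2 * β else 2 * Real.sin (k * β) / k := by
  split_ifs with hk
  · simp [hk, two_mul]
  · rw [intervalIntegral.integral_comp_mul_left Real.cos hk, integral_cos]
    rw [mul_neg, Real.sin_neg]
    field_simp
    rw [smul_eq_mul, one_div, mul_inv_cancel_left₀ hk]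
    ring

/-- The prolate matrix entry `p_{mn}(α)`: `α/π` for `m = n` and
`sin((m−n)α)/(π(m−n))` for `m ≠ n`. -/
noncomputable def prolateR (α : ℝ) (m n : ℤ) : ℝ :=
  if m = n then α / Real.pi
  else Real.sin (((m - n : ℤ) : ℝ) * α) / (Real.pi * ((m - n : ℤ) : ℝ))

/-- The `(2J+1) × (2J+1)` prolate matrix `P(α)` indexed by `m, n ∈ {−J, …, J}`. -/
noncomputable def prolateMatrix (α : ℝ) (J : ℕ) :
    Matrix (Fin (2 * J + 1)) (Fin (2 * J + 1)) ℝ :=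
  Matrix.of fun i j => prolateR α (((i : ℕ) : ℤ) - (J : ℤ)) (((j : ℕ) : ℤ) - (J : ℤ))

-- the prolate entry as an integral
lemma prolateR_eq_integral (β : ℝ) (m n : ℤ) :
    prolateR β m n = (2 * Real.pi)⁻¹ * ∫ θ in (-β)..β, Real.cos (((m - n : ℤ) : ℝ) * θ) := by
  rw [cosInt, prolateR]
  rcases eq_or_ne m n with h | h
  · simp [h, sub_self]
    field_simp [Real.pi_ne_zero]
  · have hk : ((m - n : ℤ) : ℝ) ≠ 0 := by
      exact_mod_cast sub_ne_zero.mpr h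
    rw [if_neg h, if_neg hk]
    generalize ((m - n : ℤ) : ℝ) = k at hk ⊢
    field_simp

lemma pointwise_sum (N : ℕ) (x : Fin N → ℝ) (θ : ℝ) :
    ∑ i : Fin N, ∑ j : Fin N,
        x i * x j * Real.cos ((((i : ℕ) : ℝ) - ((j : ℕ) : ℝ)) * θ)
      = (∑ i : Fin N, x i * Real.cos (((i : ℕ) : ℝ) * θ)) ^ 2
        + (∑ i : Fin N, x i * Real.sin (((i : ℕ) : ℝ) * θ)) ^ 2 := by
  simp only [sub_mul, Real.cos_sub]
  rw [sq, sq, Finset.sum_mul_sum, Finset.sum_mul_sum, ← Finset.sum_add_distrib]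
  refine Finset.sum_congr rfl fun i _ => ?_
  rw [← Finset.sum_add_distrib]
  exact Finset.sum_congr rfl fun j _ => by ring

set_option maxHeartbeats 1000000 in
lemma quadform (β : ℝ) (J : ℕ) (x : Fin (2 * J + 1) → ℝ) :
    x ⬝ᵥ (prolateMatrix β J *ᵥ x)
      = (2 * Real.pi)⁻¹ * ∫ θ in (-β)..β,
          ((∑ i : Fin (2 * J + 1), x i * Real.cos (((i : ℕ) : ℝ) * θ)) ^ 2
            + (∑ i : Fin (2 * J + 1), x i * Real.sin (((i : ℕ) : ℝ) * θ)) ^ 2) := by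
  have key : ∀ i j : Fin (2 * J + 1),
      prolateMatrix β J i j
        = (2 * Real.pi)⁻¹ * ∫ θ in (-β)..β,
            Real.cos ((((i : ℕ) : ℝ) - ((j : ℕ) : ℝ)) * θ) := by
    intro i j
    rw [prolateMatrix, Matrix.of_apply, prolateR_eq_integral]
    norm_num
  have hInt : ∀ (c : ℝ), IntervalIntegrable (fun θ => Real.cos (c * θ))
      MeasureTheory.volume (-β) β :=
    fun c => (Real.continuous_cos.comp (continuous_const.mul continuous_id)).intervalIntegrable _ _
  calc x ⬝ᵥ (prolateMatrix β J *ᵥ x)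
      = ∑ i, ∑ j, x i * x j * prolateMatrix β J i j := by
        simp only [dotProduct, Matrix.mulVec, Finset.mul_sum]
        exact Finset.sum_congr rfl fun i _ => Finset.sum_congr rfl fun j _ => by
          ring
    _ = ∑ i, ∑ j, (2 * Real.pi)⁻¹ * ∫ θ in (-β)..β,
          x i * x j * Real.cos ((((i : ℕ) : ℝ) - ((j : ℕ) : ℝ)) * θ) := by
        refine Finset.sum_congr rfl fun i _ => Finset.sum_congr rfl fun j _ => ?_
        rw [key i j, intervalIntegral.integral_const_mul]
        ring
    _ = (2 * Real.pi)⁻¹ * ∑ i, ∑ j, ∫ θ in (-β)..β,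
          x i * x j * Real.cos ((((i : ℕ) : ℝ) - ((j : ℕ) : ℝ)) * θ) := by
        rw [Finset.mul_sum]
        exact Finset.sum_congr rfl fun i _ => by rw [Finset.mul_sum]
    _ = (2 * Real.pi)⁻¹ * ∫ θ in (-β)..β, ∑ i, ∑ j,
          x i * x j * Real.cos ((((i : ℕ) : ℝ) - ((j : ℕ) : ℝ)) * θ) := by
        congr 1
        rw [intervalIntegral.integral_finset_sum
          (fun i _ => (Continuous.intervalIntegrable (by continuity) _ _ :
            IntervalIntegrable (fun θ => ∑ j : Fin (2 * J + 1),
              x i * x j * Real.cos ((((i : ℕ) : ℝ) - ((j : ℕ) : ℝ)) * θ))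
              MeasureTheory.volume (-β) β))]
        exact Finset.sum_congr rfl fun i _ =>
          (intervalIntegral.integral_finset_sum
            (fun j _ => Continuous.intervalIntegrable (by continuity) _ _)).symm
    _ = _ := by
        congr 1
        exact intervalIntegral.integral_congr fun θ _ => pointwise_sum _ x θ

lemma prolateMatrix_pi (J : ℕ) : prolateMatrix Real.pi J = 1 := by
  ext i j
  rw [prolateMatrix, Matrix.of_apply, prolateR, Matrix.one_apply]
  rcases eq_or_ne i j with h | h
  · rw [if_pos (by rw [h]), if_pos h, div_self Real.pi_ne_zero]
  · have hmn : ((i : ℕ) : ℤ) - (J : ℤ) ≠ ((j : ℕ) : ℤ) - (J : ℤ) := by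
      simp only [sub_left_inj, ne_eq, Int.natCast_inj]
      exact fun hc => h (Fin.ext hc)
    rw [if_neg hmn, if_neg h]
    have : Real.sin (((((i : ℕ) : ℤ) - (J : ℤ)) - (((j : ℕ) : ℤ) - (J : ℤ)) : ℤ) * Real.pi) = 0 :=
      Real.sin_int_mul_pi _
    rw [show (((((i : ℕ) : ℤ) - (J : ℤ)) - (((j : ℕ) : ℤ) - (J : ℤ)) : ℤ) : ℝ) * Real.pi
        = ((((((i : ℕ) : ℤ) - (J : ℤ)) - (((j : ℕ) : ℤ) - (J : ℤ)) : ℤ) : ℝ)) * Real.pi from rfl]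
    rw [this, zero_div]

lemma prolateR_symm (β : ℝ) (m n : ℤ) : prolateR β m n = prolateR β n m := by
  rcases eq_or_ne m n with h | h
  · rw [h]
  · rw [prolateR, prolateR, if_neg h, if_neg (Ne.symm h)]
    have : ((n - m : ℤ) : ℝ) = -((m - n : ℤ) : ℝ) := by push_cast; ring
    rw [this, neg_mul, Real.sin_neg, mul_neg, neg_div_neg_eq]

lemma normSq_eval_eq (N : ℕ) (x : Fin N → ℝ) (θ : ℝ) :
    Complex.normSq (Polynomial.eval (Complex.exp (θ * Complex.I))
        (∑ i : Fin N, Polynomial.C ((x i : ℝ) : ℂ) * Polynomial.X ^ (i : ℕ)))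
      = (∑ i : Fin N, x i * Real.cos (((i : ℕ) : ℝ) * θ)) ^ 2
        + (∑ i : Fin N, x i * Real.sin (((i : ℕ) : ℝ) * θ)) ^ 2 := by
  have heval : Polynomial.eval (Complex.exp (θ * Complex.I))
        (∑ i : Fin N, Polynomial.C ((x i : ℝ) : ℂ) * Polynomial.X ^ (i : ℕ))
      = ((∑ i : Fin N, x i * Real.cos (((i : ℕ) : ℝ) * θ) : ℝ) : ℂ)
        + ((∑ i : Fin N, x i * Real.sin (((i : ℕ) : ℝ) * θ) : ℝ) : ℂ) * Complex.I := by
    rw [Polynomial.eval_finset_sum]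
    simp only [Polynomial.eval_mul, Polynomial.eval_C, Polynomial.eval_pow, Polynomial.eval_X]
    have hterm : ∀ i : Fin N, ((x i : ℝ) : ℂ) * (Complex.exp ((θ : ℂ) * Complex.I)) ^ (i : ℕ)
        = ((x i * Real.cos (((i : ℕ) : ℝ) * θ) : ℝ) : ℂ)
          + ((x i * Real.sin (((i : ℕ) : ℝ) * θ) : ℝ) : ℂ) * Complex.I := by
      intro i
      rw [← Complex.exp_nat_mul]
      rw [show (((i : ℕ) : ℂ)) * ((θ : ℂ) * Complex.I) = ((((i : ℕ) : ℝ) * θ : ℝ) : ℂ) * Complex.I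
        by push_cast; ring]
      rw [Complex.exp_mul_I, ← Complex.ofReal_cos, ← Complex.ofReal_sin]
      push_cast
      ring
    rw [Finset.sum_congr rfl (fun i _ => hterm i), Finset.sum_add_distrib,
      ← Finset.sum_mul, ← Complex.ofReal_sum, ← Complex.ofReal_sum]
  rw [heval, Complex.normSq_add_mul_I]

lemma poly_ne_zero (N : ℕ) (x : Fin N → ℝ) (hx : x ≠ 0) :
    (∑ i : Fin N, Polynomial.C ((x i : ℝ) : ℂ) * Polynomial.X ^ (i : ℕ)) ≠ 0 := by
  intro hq
  apply hx
  funext j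
  have hc : (∑ i : Fin N, Polynomial.C ((x i : ℝ) : ℂ) * Polynomial.X ^ (i : ℕ)).coeff (j : ℕ)
      = ((x j : ℝ) : ℂ) := by
    rw [Polynomial.finset_sum_coeff]
    simp only [Polynomial.coeff_C_mul, Polynomial.coeff_X_pow]
    rw [Finset.sum_eq_single j]
    · simp
    · intro i _ hij
      rw [if_neg (fun hc => hij (Fin.ext hc.symm)), mul_zero]
    · simp
  rw [hq, Polynomial.coeff_zero] at hc
  exact_mod_cast hc.symm

lemma exp_injOn_Ioc (a b : ℝ) (hlen : b - a < 2 * Real.pi) :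
    Set.InjOn (fun θ : ℝ => Complex.exp (θ * Complex.I)) (Set.Ioc a b) := by
  intro θ₁ h₁ θ₂ h₂ he
  simp only at he
  rw [Complex.exp_eq_exp_iff_exists_int] at he
  obtain ⟨n, hn⟩ := he
  have hre : θ₁ = θ₂ + n * (2 * Real.pi) := by
    have : ((θ₁ : ℂ) - θ₂ - n * (2 * Real.pi)) * Complex.I = 0 := by
      rw [sub_mul, sub_mul, hn]; push_cast; ring
    rcases mul_eq_zero.mp this with h | h
    · have hc : (θ₁ : ℂ) = ((θ₂ + n * (2 * Real.pi) : ℝ) : ℂ) := by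
        push_cast
        linear_combination h
      exact_mod_cast hc
    · exact absurd h Complex.I_ne_zero
  have hb1 : |θ₁ - θ₂| < 2 * Real.pi := by
    rw [abs_sub_lt_iff]
    constructor
    · linarith [h₁.2, h₂.1, h₁.1, h₂.2]
    · linarith [h₁.2, h₂.1, h₁.1, h₂.2]
  have hn0 : n = 0 := by
    by_contra hn0
    have h1n : (1 : ℝ) ≤ |(n : ℝ)| := by
      exact_mod_cast Int.one_le_abs (by exact_mod_cast hn0)
    have : θ₁ - θ₂ = n * (2 * Real.pi) := by linarith
    rw [this, abs_mul, abs_of_pos (by positivity : (0:ℝ) < 2 * Real.pi)] at hb1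
    nlinarith [Real.pi_pos]
  rw [hn0] at hre
  simpa using hre

lemma strict_pos (N : ℕ) (x : Fin N → ℝ) (hx : x ≠ 0) (α : ℝ) (h1 : 0 < α) (h2 : α < Real.pi) :
    0 < ∫ θ in α..Real.pi,
        ((∑ i : Fin N, x i * Real.cos (((i : ℕ) : ℝ) * θ)) ^ 2
          + (∑ i : Fin N, x i * Real.sin (((i : ℕ) : ℝ) * θ)) ^ 2) := by
  set g : ℝ → ℝ := fun θ =>
    (∑ i : Fin N, x i * Real.cos (((i : ℕ) : ℝ) * θ)) ^ 2
      + (∑ i : Fin N, x i * Real.sin (((i : ℕ) : ℝ) * θ)) ^ 2 with hg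
  have hg0 : ∀ θ, 0 ≤ g θ := fun θ => add_nonneg (sq_nonneg _) (sq_nonneg _)
  have hgc : Continuous g := by
    apply Continuous.add <;> apply Continuous.pow <;> apply continuous_finset_sum <;>
      intro i _ <;> continuity
  have hInt : IntervalIntegrable g MeasureTheory.volume α Real.pi :=
    hgc.intervalIntegrable _ _
  have hnn : 0 ≤ ∫ θ in α..Real.pi, g θ :=
    intervalIntegral.integral_nonneg h2.le fun u _ => hg0 u
  rcases hnn.lt_or_eq with h | h
  · exact h
  exfalso
  -- the integral vanishes, so g = 0 a.e. on Ioc α π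
  have hae : g =ᵐ[MeasureTheory.volume.restrict (Set.Ioc α Real.pi)] 0 :=
    (intervalIntegral.integral_eq_zero_iff_of_le_of_nonneg_ae h2.le
      (Filter.Eventually.of_forall fun θ => hg0 θ) hInt).mp h.symm
  have hmset : MeasurableSet {θ : ℝ | g θ ≠ 0} := by
    have : {θ : ℝ | g θ ≠ 0} = g ⁻¹' ({0}ᶜ) := rfl
    rw [this]
    exact hgc.measurable (measurableSet_singleton 0).compl
  have hmeas : MeasureTheory.volume ({θ | g θ ≠ 0} ∩ Set.Ioc α Real.pi) = 0 := by
    have h0 : MeasureTheory.volume.restrict (Set.Ioc α Real.pi) {θ | ¬ g θ = 0} = 0 :=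
      MeasureTheory.ae_iff.mp hae
    rwa [MeasureTheory.Measure.restrict_apply hmset] at h0
  -- the zero set of g on Ioc α π is infinite
  set Z : Set ℝ := {θ ∈ Set.Ioc α Real.pi | g θ = 0} with hZ
  have hZinf : Z.Infinite := by
    intro hZfin
    have hsub : Set.Ioc α Real.pi ⊆ Z ∪ ({θ | g θ ≠ 0} ∩ Set.Ioc α Real.pi) := by
      intro θ hθ
      by_cases hgθ : g θ = 0
      · exact Or.inl ⟨hθ, hgθ⟩
      · exact Or.inr ⟨hgθ, hθ⟩
    have hle : MeasureTheory.volume (Set.Ioc α Real.pi)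
        ≤ MeasureTheory.volume Z + MeasureTheory.volume ({θ | g θ ≠ 0} ∩ Set.Ioc α Real.pi) :=
      le_trans (MeasureTheory.measure_mono hsub) (MeasureTheory.measure_union_le _ _)
    rw [hZfin.measure_zero, hmeas, add_zero, Real.volume_Ioc] at hle
    have : (0:ℝ) < Real.pi - α := by linarith
    exact absurd hle (not_le.mpr (ENNReal.ofReal_pos.mpr this))
  -- transfer to roots of the polynomial
  set q : Polynomial ℂ := ∑ i : Fin N, Polynomial.C ((x i : ℝ) : ℂ) * Polynomial.X ^ (i : ℕ)
    with hq
  have hroot : ∀ θ ∈ Z, Polynomial.IsRoot q (Complex.exp (θ * Complex.I)) := by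
    intro θ hθ
    have h0 : Complex.normSq (Polynomial.eval (Complex.exp (θ * Complex.I)) q) = 0 := by
      rw [hq, normSq_eval_eq N x θ]
      exact hθ.2
    exact Complex.normSq_eq_zero.mp h0
  have hrootsinf : {z : ℂ | Polynomial.IsRoot q z}.Infinite := by
    have himg : ((fun θ : ℝ => Complex.exp (θ * Complex.I)) '' Z).Infinite := by
      apply Set.Infinite.image ?_ hZinf
      exact (exp_injOn_Ioc α Real.pi (by linarith [Real.pi_pos])).mono
        (fun θ hθ => hθ.1)
    refine himg.mono ?_
    rintro z ⟨θ, hθ, rfl⟩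
    exact hroot θ hθ
  exact poly_ne_zero N x hx (Polynomial.eq_zero_of_infinite_isRoot q hrootsinf)

/-- For `0 < α < π` the matrix `I − P(α)` is positive definite. -/
theorem stmt_4 (J : ℕ) (α : ℝ) (h1 : 0 < α) (h2 : α < Real.pi) :
    ((1 : Matrix (Fin (2 * J + 1)) (Fin (2 * J + 1)) ℝ) - prolateMatrix α J).PosDef := by
  rw [Matrix.posDef_iff_dotProduct_mulVec]
  constructor
  · have hP : (prolateMatrix α J).IsHermitian := by
      ext i j
      rw [Matrix.conjTranspose_apply, prolateMatrix, Matrix.of_apply, Matrix.of_apply,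
        star_trivial]
      exact prolateR_symm _ _ _
    exact Matrix.IsHermitian.sub Matrix.isHermitian_one hP
  · intro y hy
    have hsy : star y = y := funext fun i => star_trivial _
    rw [Matrix.sub_mulVec, dotProduct_sub, hsy]
    rw [show (1 : Matrix (Fin (2 * J + 1)) (Fin (2 * J + 1)) ℝ) = prolateMatrix Real.pi J from
      (prolateMatrix_pi J).symm]
    rw [quadform, quadform]
    set g : ℝ → ℝ := fun θ =>
      (∑ i : Fin (2 * J + 1), y i * Real.cos (((i : ℕ) : ℝ) * θ)) ^ 2
        + (∑ i : Fin (2 * J + 1), y i * Real.sin (((i : ℕ) : ℝ) * θ)) ^ 2 with hg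
    have hg0 : ∀ θ, 0 ≤ g θ := fun θ => add_nonneg (sq_nonneg _) (sq_nonneg _)
    have hgc : Continuous g := by
      apply Continuous.add <;> apply Continuous.pow <;> apply continuous_finset_sum <;>
        intro i _ <;> continuity
    have hI : ∀ a b : ℝ, IntervalIntegrable g MeasureTheory.volume a b :=
      fun a b => hgc.intervalIntegrable _ _
    have e1 : (∫ θ in (-Real.pi)..(-α), g θ) + (∫ θ in (-α)..α, g θ)
        = ∫ θ in (-Real.pi)..α, g θ :=
      intervalIntegral.integral_add_adjacent_intervals (hI _ _) (hI _ _)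
    have e2 : (∫ θ in (-Real.pi)..α, g θ) + (∫ θ in α..Real.pi, g θ)
        = ∫ θ in (-Real.pi)..Real.pi, g θ :=
      intervalIntegral.integral_add_adjacent_intervals (hI _ _) (hI _ _)
    have hA : 0 ≤ ∫ θ in (-Real.pi)..(-α), g θ :=
      intervalIntegral.integral_nonneg (by linarith) fun u _ => hg0 u
    have hC : 0 < ∫ θ in α..Real.pi, g θ := strict_pos _ y hy α h1 h2
    have hp : 0 < (2 * Real.pi)⁻¹ := by positivity
    have hsplit : (∫ θ in (-Real.pi)..Real.pi, g θ)
        = (∫ θ in (-Real.pi)..(-α), g θ) + (∫ θ in (-α)..α, g θ)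
          + (∫ θ in α..Real.pi, g θ) := by rw [e1, e2]
    rw [hsplit]
    nlinarith [hA, hC, hp]
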